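/- Let k ≥ 1 and let I : ℝ^k → ℝ^k be a distance-preserving map of Euclidean space. For every p ∈ ℝ^k and n ∈ ℕ, if the set X = {I^i(p) : i = 0, ..., n} has at least two elements, then |NND(X)| ≤ 3^k + 1. -/

import Mathlib

/-- The nearest neighbor distance of `x` in `X`. -/
noncomputable def nnd {M : Type*} [MetricSpace M] (x : M) (X : Set M) : ℝ :=
  sInf (dist x '' (X \ {x}))

/-- The set of nearest neighbor distances of a set `X`. -/
noncomputable def NND {M : Type*} [MetricSpace M] (X : Set M) : Set ℝ :=
  (fun x => nnd x X) '' X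

open Metric MeasureTheory Set ENNReal RealInnerProductSpace

lemma packing_finset (k : ℕ) (T : Finset (EuclideanSpace ℝ (Fin k)))
    (hb : ∀ x ∈ T, ‖x‖ ≤ 1)
    (hsep : ∀ x ∈ T, ∀ y ∈ T, x ≠ y → 1 < dist x y) :
    T.card ≤ 3 ^ k := by
  classical
  have hdisj : (T : Set (EuclideanSpace ℝ (Fin k))).Pairwise
      (Function.onFun Disjoint (fun x => ball x (1/2 : ℝ))) := by
    intro x hx y hy hxy
    exact ball_disjoint_ball (by linarith [hsep x hx y hy hxy])
  have hsub : (⋃ x ∈ T, ball x (1/2 : ℝ)) ⊆ ball (0 : EuclideanSpace ℝ (Fin k)) (3/2) := by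
    intro z hz
    simp only [mem_iUnion] at hz
    obtain ⟨x, hx, hz⟩ := hz
    rw [mem_ball] at hz ⊢
    have h1 : dist z 0 ≤ dist z x + dist x 0 := dist_triangle _ _ _
    rw [dist_zero_right] at h1 ⊢
    have h2 : dist x 0 = ‖x‖ := dist_zero_right x
    linarith [hb x hx]
  have hvol : volume (⋃ x ∈ T, ball x (1/2 : ℝ))
      = T.card * volume (ball (0 : EuclideanSpace ℝ (Fin k)) (1/2)) := by
    rw [measure_biUnion_finset hdisj (fun x _ => measurableSet_ball)]
    simp [Measure.addHaar_ball_center]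
  have hle : (T.card : ℝ≥0∞) * volume (ball (0 : EuclideanSpace ℝ (Fin k)) (1/2))
      ≤ volume (ball (0 : EuclideanSpace ℝ (Fin k)) (3/2)) := by
    rw [← hvol]; exact measure_mono hsub
  have hfr : Module.finrank ℝ (EuclideanSpace ℝ (Fin k)) = k := finrank_euclideanSpace_fin
  rw [Measure.addHaar_ball_of_pos volume (0 : EuclideanSpace ℝ (Fin k)) (by norm_num : (0:ℝ) < 1/2),
    Measure.addHaar_ball_of_pos volume (0 : EuclideanSpace ℝ (Fin k)) (by norm_num : (0:ℝ) < 3/2),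
    hfr, ← mul_assoc] at hle
  have hBpos : 0 < volume (ball (0 : EuclideanSpace ℝ (Fin k)) 1) := measure_ball_pos _ _ (by norm_num)
  have hBfin : volume (ball (0 : EuclideanSpace ℝ (Fin k)) 1) ≠ ⊤ := measure_ball_lt_top.ne
  have hcard : (T.card : ℝ≥0∞) * ENNReal.ofReal ((1/2 : ℝ) ^ k) ≤ ENNReal.ofReal ((3/2 : ℝ) ^ k) :=
    by rw [← ENNReal.mul_le_mul_iff_left hBpos.ne' hBfin]; exact hle
  -- now convert to reals
  have h2 : (T.card : ℝ) * (1/2 : ℝ) ^ k ≤ (3/2 : ℝ) ^ k := by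
    have := ENNReal.toReal_mono (by simp) hcard
    rw [ENNReal.toReal_mul, ENNReal.toReal_ofReal (by positivity), ENNReal.toReal_ofReal (by positivity)] at this
    simpa using this
  have h3 : (T.card : ℝ) ≤ 3 ^ k := by
    have hp : (0:ℝ) < (1/2 : ℝ) ^ k := by positivity
    rw [← le_div_iff₀ hp] at h2
    calc (T.card : ℝ) ≤ (3/2 : ℝ)^k / (1/2:ℝ)^k := h2
      _ = 3 ^ k := by rw [div_eq_iff hp.ne', ← mul_pow]; norm_num
  exact_mod_cast h3

lemma packing_set (k : ℕ) (S : Set (EuclideanSpace ℝ (Fin k)))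
    (hb : ∀ x ∈ S, ‖x‖ ≤ 1)
    (hsep : ∀ x ∈ S, ∀ y ∈ S, x ≠ y → 1 < dist x y) :
    S.encard ≤ 3 ^ k := by
  classical
  by_contra h
  push_neg at h
  have h' : ((3 ^ k + 1 : ℕ) : ℕ∞) ≤ S.encard := by
    have := Order.add_one_le_of_lt h
    push_cast
    convert this using 2 <;> simp
  obtain ⟨t, hts, ht⟩ := Set.exists_subset_encard_eq h'
  have htfin : t.Finite := Set.finite_of_encard_eq_coe ht
  have hcard : htfin.toFinset.card = 3 ^ k + 1 := by
    have := htfin.encard_eq_coe_toFinset_card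
    rw [ht] at this
    exact_mod_cast this.symm
  have := packing_finset k htfin.toFinset
    (fun x hx => hb x (hts (htfin.mem_toFinset.mp hx)))
    (fun x hx y hy hxy => hsep x (hts (htfin.mem_toFinset.mp hx)) y (hts (htfin.mem_toFinset.mp hy)) hxy)
  omega

lemma cone_lemma (k : ℕ) (p : EuclideanSpace ℝ (Fin k)) (s : Set (EuclideanSpace ℝ (Fin k)))
    (h0 : ∀ x ∈ s, x ≠ p)
    (hsep : ∀ x ∈ s, ∀ y ∈ s, x ≠ y → max (dist p x) (dist p y) < dist x y) :
    s.encard ≤ 3 ^ k := by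
  classical
  set u : EuclideanSpace ℝ (Fin k) → EuclideanSpace ℝ (Fin k) :=
    fun x => ‖x - p‖⁻¹ • (x - p) with hu
  have hnorm : ∀ x ∈ s, ‖u x‖ = 1 := by
    intro x hx
    have hxp : x - p ≠ 0 := sub_ne_zero.mpr (h0 x hx)
    have ha : (0:ℝ) < ‖x - p‖ := norm_pos_iff.mpr hxp
    rw [hu]
    simp only [norm_smul, norm_inv, norm_norm]
    field_simp
  have key : ∀ x ∈ s, ∀ y ∈ s, x ≠ y → 1 < dist (u x) (u y) := by
    intro x hx y hy hxy
    have ha : (0:ℝ) < ‖x - p‖ := norm_pos_iff.mpr (sub_ne_zero.mpr (h0 x hx))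
    have hb : (0:ℝ) < ‖y - p‖ := norm_pos_iff.mpr (sub_ne_zero.mpr (h0 y hy))
    set a := ‖x - p‖ with hadef
    set b := ‖y - p‖ with hbdef
    have hc : max a b < dist x y := by
      have := hsep x hx y hy hxy
      rwa [dist_comm p x, dist_comm p y, dist_eq_norm, dist_eq_norm] at this
    have hca : a < dist x y := lt_of_le_of_lt (le_max_left a b) hc
    have hcb : b < dist x y := lt_of_le_of_lt (le_max_right a b) hc
    have hinner : (inner ℝ (x - p) (y - p) : ℝ) = (a^2 + b^2 - dist x y ^ 2)/2 := by
      have h1 := norm_sub_sq_real (x - p) (y - p)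
      have h2 : (x - p) - (y - p) = x - y := by abel
      rw [h2, ← dist_eq_norm] at h1
      linarith
    have hinnerlt : (inner ℝ (x - p) (y - p) : ℝ) < a * b / 2 := by
      rw [hinner]
      rcases le_total a b with hab | hab
      · nlinarith
      · nlinarith
    have hd2 : dist (u x) (u y) ^ 2 = 2 - 2 * ((inner ℝ (x - p) (y - p) : ℝ) / (a * b)) := by
      rw [dist_eq_norm, norm_sub_sq_real, hnorm x hx, hnorm y hy, hu]
      simp only [real_inner_smul_left, real_inner_smul_right]
      rw [← hadef, ← hbdef]
      field_simp
      ring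
    have hfrac : (inner ℝ (x - p) (y - p) : ℝ) / (a * b) < 1/2 := by
      rw [div_lt_iff₀ (by positivity)]
      linarith
    have : 1 < dist (u x) (u y) ^ 2 := by rw [hd2]; linarith
    nlinarith [dist_nonneg (x := u x) (y := u y)]
  have hinj : Set.InjOn u s := by
    intro x hx y hy hxy
    by_contra hne
    have := key x hx y hy hne
    rw [hxy] at this
    norm_num at this
  rw [← hinj.encard_image]
  apply packing_set k (u '' s)
  · rintro _ ⟨x, hx, rfl⟩
    exact (hnorm x hx).le
  · rintro _ ⟨x, hx, rfl⟩ _ ⟨y, hy, rfl⟩ hne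
    exact key x hx y hy (fun h => hne (by rw [h]))

lemma isometry_iterate' {E : Type*} [MetricSpace E] (I : E → E) (hI : Isometry I) :
    ∀ i, Isometry (I^[i])
  | 0 => by simpa using isometry_id
  | (m+1) => by rw [Function.iterate_succ]; exact (isometry_iterate' I hI m).comp hI

lemma iterate_dist (k : ℕ) (I : EuclideanSpace ℝ (Fin k) → EuclideanSpace ℝ (Fin k))
    (hI : Isometry I) (p : EuclideanSpace ℝ (Fin k)) (i j : ℕ) (hij : i ≤ j) :
    dist (I^[i] p) (I^[j] p) = dist p (I^[j - i] p) := by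
  have h1 : I^[j] p = I^[i] (I^[j - i] p) := by
    rw [← Function.iterate_add_apply]
    congr 1
    omega
  rw [h1]
  have h2 : Isometry (I^[i]) := isometry_iterate' I hI i
  exact h2.dist_eq _ _

lemma records_encard (k n : ℕ) (I : EuclideanSpace ℝ (Fin k) → EuclideanSpace ℝ (Fin k))
    (hI : Isometry I) (p : EuclideanSpace ℝ (Fin k)) :
    {m : ℕ | 0 < m ∧ m ≤ n ∧ n < 2 * m ∧ dist p (I^[m] p) ≠ 0 ∧
      ∀ m', 0 < m' → m' < m → dist p (I^[m'] p) ≠ 0 →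
        dist p (I^[m] p) < dist p (I^[m'] p)}.encard ≤ 3 ^ k := by
  classical
  set R := {m : ℕ | 0 < m ∧ m ≤ n ∧ n < 2 * m ∧ dist p (I^[m] p) ≠ 0 ∧
      ∀ m', 0 < m' → m' < m → dist p (I^[m'] p) ≠ 0 →
        dist p (I^[m] p) < dist p (I^[m'] p)} with hR
  set f : ℕ → EuclideanSpace ℝ (Fin k) := fun m => I^[m] p with hf
  -- later record has strictly smaller distance
  have hlater : ∀ m ∈ R, ∀ m' ∈ R, m < m' → dist p (f m') < dist p (f m) := by
    intro m hm m' hm' hlt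
    exact hm'.2.2.2.2 m hm.1 hlt hm.2.2.2.1
  have haux : ∀ m ∈ R, ∀ m' ∈ R, m < m' →
      max (dist p (f m)) (dist p (f m')) < dist (f m) (f m') := by
    intro m hm m' hm' hlt
    have hdd : dist (f m) (f m') = dist p (I^[m' - m] p) :=
      iterate_dist k I hI p m m' hlt.le
    have h1 : 0 < m' - m := by omega
    have h2 : m' - m < m := by have := hm.2.2.1; have := hm'.2.1; omega
    have hne0 : dist p (I^[m' - m] p) ≠ 0 := by
      intro h
      have hfeq : f m = f m' := by
        have := hdd.trans h
        exact dist_eq_zero.mp this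
      have := hlater m hm m' hm' hlt
      rw [hfeq] at this
      exact lt_irrefl _ this
    have hrec : dist p (f m) < dist p (I^[m' - m] p) :=
      hm.2.2.2.2 (m' - m) h1 h2 hne0
    have hmax : max (dist p (f m)) (dist p (f m')) = dist p (f m) :=
      max_eq_left (hlater m hm m' hm' hlt).le
    rw [hmax, hdd]
    exact hrec
  have hinj : Set.InjOn f R := by
    intro m hm m' hm' heq
    by_contra hne
    rcases lt_or_gt_of_ne hne with h | h
    · have := hlater m hm m' hm' h
      rw [heq] at this
      exact lt_irrefl _ this
    · have := hlater m' hm' m hm h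
      rw [heq] at this
      exact lt_irrefl _ this
  rw [← hinj.encard_image]
  apply cone_lemma k p
  · rintro _ ⟨m, hm, rfl⟩
    exact fun h => hm.2.2.2.1 (by show dist p (f m) = 0; rw [h]; simp)
  · rintro _ ⟨m, hm, rfl⟩ _ ⟨m', hm', rfl⟩ hne
    have hmm : m ≠ m' := fun h => hne (by rw [h])
    rcases lt_or_gt_of_ne hmm with h | h
    · exact haux m hm m' hm' h
    · rw [max_comm, dist_comm (f m) (f m')]
      exact haux m' hm' m hm h

/-- For any distance-preserving map `I` of Euclidean `k`-space, any orbit segment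
`{I^i(p) : i = 0, …, n}` with at least two elements has at most `3^k + 1` distinct
nearest neighbor distances. -/
theorem nnd_euclidean_isometry (k : ℕ) (hk : 1 ≤ k)
    (I : EuclideanSpace ℝ (Fin k) → EuclideanSpace ℝ (Fin k)) (hI : Isometry I)
    (p : EuclideanSpace ℝ (Fin k)) (n : ℕ)
    (X : Set (EuclideanSpace ℝ (Fin k))) (hX : X = {x | ∃ i : ℕ, i ≤ n ∧ x = I^[i] p})
    (h2 : X.Nontrivial) :
    (NND X).encard ≤ 3 ^ k + 1 := by
  classical
  set d : ℕ → ℝ := fun m => dist p (I^[m] p) with hd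
  have hXfin : X.Finite := by
    have : X = (fun i => I^[i] p) '' (Set.Iic n) := by
      rw [hX]; ext x; simp [Set.mem_image, eq_comm]
    rw [this]
    exact (Set.finite_Iic n).image _
  -- extraction of the min structure of each nnd value
  have main : ∀ v ∈ NND X, ∃ t : ℕ, n ≤ 2 * t ∧ t ≤ n ∧
      (∃ m, 0 < m ∧ m ≤ t ∧ d m ≠ 0 ∧ d m = v) ∧
      (∀ m, 0 < m → m ≤ t → d m ≠ 0 → v ≤ d m) := by
    rintro v hv
    obtain ⟨x, hxX, rfl⟩ := hv
    obtain ⟨i, hin, rfl⟩ : ∃ i, i ≤ n ∧ x = I^[i] p := by rw [hX] at hxX; exact hxX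
    set x := I^[i] p with hxdef
    set A : Set ℝ := dist x '' (X \ {x}) with hA
    have hAfin : A.Finite := (hXfin.subset Set.diff_subset).image _
    have hAne : A.Nonempty := by
      obtain ⟨y, hy, z, hz, hyz⟩ := h2
      rcases eq_or_ne y x with h | h
      · exact ⟨dist x z, z, ⟨hz, by simp [← h, (Ne.symm hyz)]⟩, rfl⟩
      · exact ⟨dist x y, y, ⟨hy, by simp [h]⟩, rfl⟩
    have hmem : nnd x X ∈ A := hAne.csInf_mem hAfin
    have hlb : ∀ a ∈ A, nnd x X ≤ a := fun a ha => csInf_le hAfin.bddBelow ha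
    refine ⟨max i (n - i), by omega, by omega, ?_, ?_⟩
    · obtain ⟨y, ⟨hyX, hynx⟩, hdxy⟩ := hmem
      have hynx' : y ≠ x := by simpa using hynx
      obtain ⟨j, hjn, rfl⟩ : ∃ j, j ≤ n ∧ y = I^[j] p := by rw [hX] at hyX; exact hyX
      rcases le_total i j with hij | hij
      · refine ⟨j - i, ?_, by omega, ?_, ?_⟩
        · rcases Nat.eq_or_lt_of_le hij with h | h
          · exact absurd (by rw [hxdef, h]) hynx'
          · omega
        · rw [hd]
          simp only
          rw [← iterate_dist k I hI p i j hij, dist_comm]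
          exact dist_ne_zero.mpr hynx'
        · rw [hd]
          simp only
          rw [← iterate_dist k I hI p i j hij]
          exact hdxy
      · refine ⟨i - j, ?_, by omega, ?_, ?_⟩
        · rcases Nat.eq_or_lt_of_le hij with h | h
          · exact absurd (by rw [hxdef, h]) hynx'
          · omega
        · rw [hd]
          simp only
          rw [← iterate_dist k I hI p j i hij]
          exact dist_ne_zero.mpr hynx'
        · rw [hd]
          simp only
          rw [← iterate_dist k I hI p j i hij, dist_comm]
          exact hdxy
    · intro m hm0 hmt hmne
      by_cases hcase : i + m ≤ n
      · have hdm : dist x (I^[i + m] p) = d m := by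
          rw [iterate_dist k I hI p i (i + m) (by omega)]
          simp [hd]
        have hyX : I^[i + m] p ∈ X := by rw [hX]; exact ⟨i + m, hcase, rfl⟩
        have hynx : I^[i + m] p ≠ x := by
          intro h
          rw [← hdm, h, dist_self] at hmne
          exact hmne rfl
        exact le_trans (hlb _ ⟨_, ⟨hyX, by simp [hynx]⟩, rfl⟩) hdm.le
      · have hmi : m ≤ i := by omega
        have hdm : dist x (I^[i - m] p) = d m := by
          rw [dist_comm, iterate_dist k I hI p (i - m) i (by omega)]
          have : i - (i - m) = m := by omega
          rw [this]
        have hyX : I^[i - m] p ∈ X := by rw [hX]; exact ⟨i - m, by omega, rfl⟩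
        have hynx : I^[i - m] p ≠ x := by
          intro h
          rw [← hdm, h, dist_self] at hmne
          exact hmne rfl
        exact le_trans (hlb _ ⟨_, ⟨hyX, by simp [hynx]⟩, rfl⟩) hdm.le
  -- the "first achiever" function
  set F : ℝ → ℕ := fun v =>
    if h : ∃ m, 0 < m ∧ d m ≠ 0 ∧ d m = v then Nat.find h else 0 with hF
  have hFspec : ∀ v ∈ NND X, 0 < F v ∧ d (F v) ≠ 0 ∧ d (F v) = v := by
    intro v hv
    obtain ⟨t, _, _, ⟨m, hm0, hmt, hmne, hmv⟩, _⟩ := main v hv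
    have hex : ∃ m, 0 < m ∧ d m ≠ 0 ∧ d m = v := ⟨m, hm0, hmne, hmv⟩
    rw [hF]; simp only [dif_pos hex]
    exact Nat.find_spec hex
  have hFle : ∀ v ∈ NND X, ∀ t : ℕ, (∃ m, 0 < m ∧ m ≤ t ∧ d m ≠ 0 ∧ d m = v) → F v ≤ t := by
    intro v hv t ⟨m, hm0, hmt, hmne, hmv⟩
    have hex : ∃ m, 0 < m ∧ d m ≠ 0 ∧ d m = v := ⟨m, hm0, hmne, hmv⟩
    rw [hF]; simp only [dif_pos hex]
    exact le_trans (Nat.find_min' hex ⟨hm0, hmne, hmv⟩) hmt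
  have hFmin : ∀ v, ∀ (hex : ∃ m, 0 < m ∧ d m ≠ 0 ∧ d m = v), ∀ m' < F v,
      ¬(0 < m' ∧ d m' ≠ 0 ∧ d m' = v) := by
    intro v hex m' hm'
    rw [hF] at hm'; simp only [dif_pos hex] at hm'
    exact Nat.find_min hex hm'
  set Rec : Set ℕ := {m : ℕ | 0 < m ∧ m ≤ n ∧ n < 2 * m ∧ dist p (I^[m] p) ≠ 0 ∧
      ∀ m', 0 < m' → m' < m → dist p (I^[m'] p) ≠ 0 →
        dist p (I^[m] p) < dist p (I^[m'] p)} with hRec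
  set V₂ : Set ℝ := {v ∈ NND X | n < 2 * F v} with hV₂
  -- V₂ injects into Rec
  have hV₂card : V₂.encard ≤ 3 ^ k := by
    have hinj : Set.InjOn F V₂ := by
      intro v hv v' hv' heq
      have h1 := (hFspec v hv.1).2.2
      have h2 := (hFspec v' hv'.1).2.2
      rw [← h1, ← h2, heq]
    have hsub : F '' V₂ ⊆ Rec := by
      rintro _ ⟨v, hv, rfl⟩
      obtain ⟨t, htn, htn', hex, hlb⟩ := main v hv.1
      obtain ⟨hF0, hFne, hFv⟩ := hFspec v hv.1
      have hFt : F v ≤ t := hFle v hv.1 t hex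
      have hexg : ∃ m, 0 < m ∧ d m ≠ 0 ∧ d m = v := by
        obtain ⟨m, hm0, hmt, hmne, hmv⟩ := hex; exact ⟨m, hm0, hmne, hmv⟩
      refine ⟨hF0, by omega, hv.2, hFne, ?_⟩
      intro m' hm'0 hm'lt hm'ne
      have hle : v ≤ d m' := hlb m' hm'0 (by omega) hm'ne
      rcases eq_or_lt_of_le hle with h | h
      · exact absurd ⟨hm'0, hm'ne, h.symm⟩ (hFmin v hexg m' hm'lt)
      · show d (F v) < d m'
        rw [hFv]; exact h
    calc V₂.encard = (F '' V₂).encard := (hinj.encard_image).symm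
      _ ≤ Rec.encard := Set.encard_le_encard hsub
      _ ≤ 3 ^ k := records_encard k n I hI p
  -- at most one value outside V₂
  have hV₁sub : (NND X \ V₂).Subsingleton := by
    intro v hv v' hv'
    obtain ⟨t, htn, _, hex, hlb⟩ := main v hv.1
    obtain ⟨t', htn', _, hex', hlb'⟩ := main v' hv'.1
    have h2v : ¬ n < 2 * F v := fun h => hv.2 ⟨hv.1, h⟩
    have h2v' : ¬ n < 2 * F v' := fun h => hv'.2 ⟨hv'.1, h⟩
    obtain ⟨hF0, hFne, hFv⟩ := hFspec v hv.1
    obtain ⟨hF0', hFne', hFv'⟩ := hFspec v' hv'.1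
    have hle1 : v' ≤ v := by
      have := hlb' (F v) hF0 (by omega) hFne
      rwa [hFv] at this
    have hle2 : v ≤ v' := by
      have := hlb (F v') hF0' (by omega) hFne'
      rwa [hFv'] at this
    exact le_antisymm hle2 hle1
  have hsplit : NND X = V₂ ∪ (NND X \ V₂) := by
    rw [Set.union_diff_cancel (Set.sep_subset _ _)]
  calc (NND X).encard = (V₂ ∪ (NND X \ V₂)).encard := by rw [← hsplit]
    _ ≤ V₂.encard + (NND X \ V₂).encard := Set.encard_union_le _ _
    _ ≤ 3 ^ k + 1 := add_le_add hV₂card (Set.encard_le_one_iff.mpr (fun a b ha hb => hV₁sub ha hb))
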